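/- arXiv:1709.03867 — 2 statements merged into one kernel-verified Lean document; each statement's English description precedes it below -/
import Mathlib

section
/- Define A(α) = (ln((2 - α)/(1 - α)) + 1)·(1 - α) + α and B(α) = 2α. There exists a unique α* ∈ (1/2, 1) with A(α*) = B(α*), and A(α*) < 1.43. -/
open Real Set

noncomputable def fcross : ℝ → ℝ := fun α => (Real.log ((2 - α) / (1 - α)) + 1) * (1 - α) - α

lemma fcross_deriv {x : ℝ} (hx : x ∈ Set.Ioo (1/2 : ℝ) 1) :
    HasDerivAt fcross (1/(2-x) - Real.log ((2-x)/(1-x)) - 2) x := by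
  obtain ⟨hx1, hx2⟩ := hx
  have h1 : (0:ℝ) < 1 - x := by linarith
  have h2 : (0:ℝ) < 2 - x := by linarith
  have hq : (0:ℝ) < (2 - x)/(1 - x) := div_pos h2 h1
  have hu : HasDerivAt (fun y : ℝ => 2 - y) (-1) x := (hasDerivAt_id x).const_sub 2
  have hv : HasDerivAt (fun y : ℝ => 1 - y) (-1) x := (hasDerivAt_id x).const_sub 1
  have hquot : HasDerivAt (fun y : ℝ => (2 - y)/(1 - y))
      ((-1 * (1 - x) - (2 - x) * (-1)) / (1 - x)^2) x := hu.div hv (ne_of_gt h1)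
  have hlog : HasDerivAt (fun y : ℝ => Real.log ((2 - y)/(1 - y)))
      (((-1 * (1 - x) - (2 - x) * (-1)) / (1 - x)^2) / ((2 - x)/(1 - x))) x :=
    hquot.log (ne_of_gt hq)
  have h := (((hlog.add_const 1).mul hv).sub (hasDerivAt_id x))
  refine h.congr_deriv ?_
  field_simp
  ring

lemma fcross_anti : StrictAntiOn fcross (Set.Ioo (1/2 : ℝ) 1) := by
  apply strictAntiOn_of_deriv_neg (convex_Ioo _ _)
  · intro x hx
    exact (fcross_deriv hx).differentiableAt.continuousAt.continuousWithinAt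
  · intro x hx
    rw [interior_Ioo] at hx
    rw [(fcross_deriv hx).deriv]
    obtain ⟨hx1, hx2⟩ := hx
    have h1 : (0:ℝ) < 1 - x := by linarith
    have h2 : (1:ℝ) < 2 - x := by linarith
    have hlog : 0 ≤ Real.log ((2 - x)/(1 - x)) := by
      apply Real.log_nonneg
      rw [le_div_iff₀ h1]; linarith
    have : 1/(2-x) < 1 := by
      rw [div_lt_one (by linarith)]; linarith
    linarith

lemma fcross_pos : 0 < fcross 0.6 := by
  have h : ((2:ℝ) - 0.6) / (1 - 0.6) = 3.5 := by norm_num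
  have hexp : Real.exp (1/2) < 3.5 := by
    nlinarith [Real.exp_one_lt_d9, Real.exp_pos (1/2:ℝ),
      Real.exp_add (1/2:ℝ) (1/2), Real.exp_pos (1:ℝ)]
  have hlog : (1/2 : ℝ) < Real.log 3.5 := by
    rw [Real.lt_log_iff_exp_lt (by norm_num)]; exact hexp
  unfold fcross
  rw [h]
  nlinarith

lemma fcross_neg : fcross 0.715 < 0 := by
  have h : ((2:ℝ) - 0.715) / (1 - 0.715) = 257/57 := by norm_num
  have hexp : (257:ℝ)/57 < Real.exp (86/57) := by
    have hb := Real.sum_le_exp_of_nonneg (by norm_num : (0:ℝ) ≤ 86/57) 7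
    refine lt_of_lt_of_le ?_ hb
    simp [Finset.sum_range_succ, Nat.factorial]
    norm_num
  have hlog : Real.log (257/57) < 86/57 := by
    rw [Real.log_lt_iff_lt_exp (by norm_num)]; exact hexp
  unfold fcross
  rw [h]
  nlinarith

theorem crossing_point :
    (∃! α : ℝ, α ∈ Set.Ioo (1/2 : ℝ) 1 ∧
      (Real.log ((2 - α) / (1 - α)) + 1) * (1 - α) + α = 2 * α) ∧
    (∀ α ∈ Set.Ioo (1/2 : ℝ) 1,
      (Real.log ((2 - α) / (1 - α)) + 1) * (1 - α) + α = 2 * α →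
      (Real.log ((2 - α) / (1 - α)) + 1) * (1 - α) + α < 1.43) := by
  have hmem6 : (0.6 : ℝ) ∈ Set.Ioo (1/2 : ℝ) 1 := by norm_num
  have hmem7 : (0.715 : ℝ) ∈ Set.Ioo (1/2 : ℝ) 1 := by norm_num
  have heq : ∀ α : ℝ, ((Real.log ((2 - α) / (1 - α)) + 1) * (1 - α) + α = 2 * α) ↔ fcross α = 0 := by
    intro α; unfold fcross; constructor <;> intro h <;> linarith
  -- continuity on [0.6, 0.715]
  have hcont : ContinuousOn fcross (Set.Icc (0.6:ℝ) 0.715) := by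
    intro x hx
    have hx' : x ∈ Set.Ioo (1/2 : ℝ) 1 := ⟨by linarith [hx.1], by linarith [hx.2]⟩
    exact (fcross_deriv hx').differentiableAt.continuousAt.continuousWithinAt
  have hivt := intermediate_value_Ioo' (by norm_num : (0.6:ℝ) ≤ 0.715) hcont
  have h0 : (0:ℝ) ∈ Set.Ioo (fcross 0.715) (fcross 0.6) := ⟨fcross_neg, fcross_pos⟩
  obtain ⟨c, hc, hfc⟩ := hivt h0
  have hcmem : c ∈ Set.Ioo (1/2 : ℝ) 1 := ⟨by linarith [hc.1], by linarith [hc.2]⟩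
  -- key: any root is < 0.715
  have hroot_lt : ∀ α ∈ Set.Ioo (1/2:ℝ) 1, fcross α = 0 → α < 0.715 := by
    intro α hα h0'
    by_contra hge
    push_neg at hge
    rcases eq_or_lt_of_le hge with heq' | hlt
    · rw [← heq'] at h0'; linarith [fcross_neg, h0'.symm ▸ (le_refl (0:ℝ))]
    · have := fcross_anti hmem7 hα hlt
      rw [h0'] at this
      linarith [fcross_neg]
  constructor
  · refine ⟨c, ⟨hcmem, (heq c).mpr hfc⟩, ?_⟩
    intro y hy
    have hy0 := (heq y).mp hy.2
    exact fcross_anti.injOn hy.1 hcmem (by rw [hy0, hfc])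
  · intro α hα hA
    have h0' := (heq α).mp hA
    have hlt := hroot_lt α hα h0'
    have : (Real.log ((2 - α) / (1 - α)) + 1) * (1 - α) + α = 2 * α := hA
    rw [this]
    norm_num
    linarith
end

section
/- Define A(α) = (ln((2 - α)/(1 - α)) + 1)·(1 - α) + α and B(α) = 2α for α ∈ (1/2, 1). Then max over α ∈ (1/2,1) of min(A(α), B(α)) is less than 1.43. -/
/-- Tangent line bound for log at `exp c`. -/
lemma log_tangent {x : ℝ} (c : ℝ) (hx : 0 < x) :
    Real.log x ≤ x / Real.exp c + c - 1 := by
  have h := Real.log_le_sub_one_of_pos (show 0 < x / Real.exp c by positivity)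
  rw [Real.log_div (ne_of_gt hx) (Real.exp_ne_zero c), Real.log_exp] at h
  linarith

lemma exp_quarter_ge : (1.284 : ℝ) ≤ Real.exp (1/4) := by
  have h4 : Real.exp (1/4) ^ (4 : ℕ) = Real.exp 1 := by
    rw [← Real.exp_nat_mul]; norm_num
  have he := Real.exp_one_gt_d9
  by_contra hc
  push_neg at hc
  have h5 := pow_le_pow_left₀ (Real.exp_pos (1/4 : ℝ)).le hc.le 4
  rw [h4] at h5
  norm_num at h5
  linarith

lemma exp_half_ge : (1.64872 : ℝ) ≤ Real.exp (1/2) := by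
  have h2 : Real.exp (1/2) ^ (2 : ℕ) = Real.exp 1 := by
    rw [← Real.exp_nat_mul]; norm_num
  have he := Real.exp_one_gt_d9
  by_contra hc
  push_neg at hc
  have h5 := pow_le_pow_left₀ (Real.exp_pos (1/2 : ℝ)).le hc.le 2
  rw [h2] at h5
  norm_num at h5
  linarith

/-- Key numeric bound: for `0 < t ≤ 0.28505`, `t * log((1+t)/t) ≤ 0.4299`. -/
lemma key_bound {t : ℝ} (ht0 : 0 < t) (ht : t ≤ 0.28505) :
    t * Real.log ((1 + t) / t) ≤ 0.4299 := by
  have hlog : Real.log ((1 + t) / t) = Real.log (1 + t) - Real.log t :=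
    Real.log_div (by positivity) (ne_of_gt ht0)
  -- bound on t * log (1+t)
  have h1 : Real.log (1 + t) ≤ Real.log (1.28505 : ℝ) := by
    apply Real.log_le_log (by linarith)
    norm_num; linarith
  have h2 : Real.log (1.28505 : ℝ) ≤ 1.28505 / Real.exp (1/4) + 1/4 - 1 :=
    log_tangent (1/4) (by norm_num)
  have hq := exp_quarter_ge
  have h3 : (1.28505 : ℝ) / Real.exp (1/4) ≤ 1.28505 / 1.284 := by
    apply div_le_div_of_nonneg_left (by norm_num) (by norm_num) hq
  have hlog1 : Real.log (1 + t) ≤ 1.28505 / 1.284 - 3/4 := by linarith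
  have hlog1pos : (0 : ℝ) ≤ Real.log (1 + t) := Real.log_nonneg (by linarith)
  have hA : t * Real.log (1 + t) ≤ 0.28505 * (1.28505 / 1.284 - 3/4) := by
    have := mul_le_mul ht hlog1 hlog1pos (by norm_num : (0:ℝ) ≤ 0.28505)
    linarith
  -- bound on -t * log t :  -t log t ≤ 1/b + t (log b - 1),  b = 2 exp(1/2)
  have hb : (0 : ℝ) < 2 * Real.exp (1/2) := by positivity
  have h4 := Real.log_le_sub_one_of_pos
    (show 0 < 1 / (2 * Real.exp (1/2) * t) by positivity)
  have h5 : Real.log (1 / (2 * Real.exp (1/2) * t))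
      = -(Real.log 2 + 1/2) - Real.log t := by
    rw [Real.log_div one_ne_zero (by positivity), Real.log_one,
      Real.log_mul (ne_of_gt hb) (ne_of_gt ht0),
      Real.log_mul (two_ne_zero) (Real.exp_ne_zero _), Real.log_exp]
    ring
  rw [h5] at h4
  -- so : -(log 2 + 1/2) - log t ≤ 1/(2 exp(1/2) t) - 1
  have h6 : -(t * Real.log t) ≤ 1 / (2 * Real.exp (1/2)) + t * (Real.log 2 + 1/2 - 1) := by
    have := mul_le_mul_of_nonneg_left h4 (le_of_lt ht0)
    have ht' : t * (1 / (2 * Real.exp (1/2) * t)) = 1 / (2 * Real.exp (1/2)) := by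
      field_simp
    nlinarith
  have hh := exp_half_ge
  have h7 : 1 / (2 * Real.exp (1/2)) ≤ 1 / (2 * 1.64872) := by
    apply div_le_div_of_nonneg_left (by norm_num) (by norm_num) (by linarith)
  have hl2 := Real.log_two_lt_d9
  have hl2' := Real.log_two_gt_d9
  have h8 : t * (Real.log 2 + 1/2 - 1) ≤ 0.28505 * (0.6931471808 - 1/2) := by
    have hpos : (0:ℝ) ≤ Real.log 2 + 1/2 - 1 := by linarith
    nlinarith
  have : t * Real.log ((1 + t) / t) = t * Real.log (1 + t) + -(t * Real.log t) := by
    rw [hlog]; ring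
  rw [this]
  have : -(t * Real.log t) ≤ 1 / (2 * 1.64872) + 0.28505 * (0.6931471808 - 1/2) := by
    linarith
  calc t * Real.log (1 + t) + -(t * Real.log t)
      ≤ 0.28505 * (1.28505 / 1.284 - 3/4)
        + (1 / (2 * 1.64872) + 0.28505 * (0.6931471808 - 1/2)) := by linarith
    _ ≤ 0.4299 := by norm_num

theorem sup_min_lt :
    sSup {x : ℝ | ∃ α ∈ Set.Ioo (1/2 : ℝ) 1,
      x = min ((Real.log ((2 - α) / (1 - α)) + 1) * (1 - α) + α) (2 * α)} < 1.43 := by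
  have hsup : sSup {x : ℝ | ∃ α ∈ Set.Ioo (1/2 : ℝ) 1,
      x = min ((Real.log ((2 - α) / (1 - α)) + 1) * (1 - α) + α) (2 * α)} ≤ 1.4299 := by
    apply Real.sSup_le _ (by norm_num)
    rintro x ⟨α, ⟨hα1, hα2⟩, rfl⟩
    rcases le_or_gt α 0.71495 with h | h
    · exact le_trans (min_le_right _ _) (by linarith)
    · refine le_trans (min_le_left _ _) ?_
      set t := 1 - α with htdef
      have ht0 : 0 < t := by simp [htdef]; linarith
      have ht : t ≤ 0.28505 := by simp [htdef]; linarith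
      have h2 : (2 : ℝ) - α = 1 + t := by simp [htdef]; ring
      have key := key_bound ht0 ht
      rw [h2]
      nlinarith [key]
  calc sSup _ ≤ (1.4299 : ℝ) := hsup
    _ < 1.43 := by norm_num
end
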